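/- Let p be an odd prime and let G be a finite group generated by two elements a and b such that a has order p^n for some n ≥ 1, b has order p, the cyclic subgroup ⟨a⟩ is normal in G, and ⟨a⟩ ∩ ⟨b⟩ = 1 (so G is a semidirect product Z_(p^n) ⋊ Z_p of order p^(n+1)). Then the set {g in G : g^p = 1} equals the subgroup of G generated by a^(p^(n-1)) and b, and this subgroup is elementary abelian of order p^2 (it is the internal direct product ⟨a^(p^(n-1))⟩ × ⟨b⟩). -/

import Mathlib

open Finset in
lemma aux_sum (p : ℕ) (hp : p.Prime) (hodd : p ≠ 2) (s : ℤ) (h : (p:ℤ) ∣ s - 1) :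
    ∃ w : ℤ, (∑ t ∈ Finset.range p, s ^ t) = p * (1 + p * w) := by
  obtain ⟨e, he⟩ := h
  have hs : s = 1 + p * e := by linarith
  have key : ∀ t : ℕ, (p:ℤ)^2 ∣ s ^ t - 1 - (p * e) * t := by
    intro t
    induction t with
    | zero => simp
    | succ t ih =>
      have h1 : (p:ℤ) ∣ s ^ t - 1 := by
        have : (s - 1) ∣ s ^ t - 1 := by simpa using sub_dvd_pow_sub_pow s 1 t
        exact dvd_trans ⟨e, he⟩ this
      obtain ⟨u, hu⟩ := ih
      obtain ⟨v, hv⟩ := h1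
      refine ⟨u + e * v, ?_⟩
      push_cast
      linear_combination hu + (p*e)*hv + (s^t)*hs
  have hsum : (p:ℤ)^2 ∣ (∑ t ∈ Finset.range p, (s ^ t - 1 - (p * e) * t)) :=
    Finset.dvd_sum fun t _ => key t
  have hgauss : (p:ℤ) ∣ (∑ t ∈ Finset.range p, (t:ℤ)) := by
    have h2 : (∑ t ∈ Finset.range p, t) * 2 = p * (p - 1) := Finset.sum_range_id_mul_two p
    have hd : (p:ℕ) ∣ (∑ t ∈ Finset.range p, t) * 2 := ⟨p - 1, h2⟩
    have hcop : Nat.Coprime p 2 := (Nat.coprime_primes hp Nat.prime_two).mpr hodd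
    have := Nat.Coprime.dvd_of_dvd_mul_right hcop hd
    have := Int.natCast_dvd_natCast.mpr this
    simpa using this
  have expand : (∑ t ∈ Finset.range p, s ^ t)
      = (∑ t ∈ Finset.range p, (s ^ t - 1 - (p * e) * t)) + p + (p*e) * (∑ t ∈ Finset.range p, (t:ℤ)) := by
    simp only [Finset.sum_sub_distrib, Finset.sum_const, Finset.card_range, nsmul_eq_mul,
      mul_one, Finset.mul_sum]
    ring
  obtain ⟨u, hu⟩ := hsum
  obtain ⟨v, hv⟩ := hgauss
  refine ⟨u + e * v, ?_⟩
  rw [expand, hu, hv]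
  ring

lemma conj_zpow_eq {G : Type*} [Group G] (a u : G) (s : ℤ) (h : u * a * u⁻¹ = a ^ s)
    (i : ℤ) : u * a ^ i * u⁻¹ = a ^ (s * i) := by
  have := map_zpow (MulAut.conj u) a i
  simp only [MulAut.conj_apply] at this
  rw [this, h, ← zpow_mul]

lemma conj_pow_zpow {G : Type*} [Group G] (a u : G) (s : ℤ) (h : u * a * u⁻¹ = a ^ s) :
    ∀ (k : ℕ) (i : ℤ), u ^ k * a ^ i * (u ^ k)⁻¹ = a ^ (s ^ k * i) := by
  intro k
  induction k with
  | zero => simp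
  | succ k ih =>
    intro i
    have : u ^ (k+1) * a ^ i * (u ^ (k+1))⁻¹ = u * (u ^ k * a ^ i * (u ^ k)⁻¹) * u⁻¹ := by
      rw [pow_succ']
      group
    rw [this, ih i, conj_zpow_eq a u s h]
    congr 1
    ring


lemma aux_fermat (p : ℕ) (hp : p.Prime) (r : ℤ) (h : (p:ℤ) ∣ r ^ p - 1) : (p:ℤ) ∣ r - 1 := by
  haveI : Fact p.Prime := ⟨hp⟩
  have h1 := (ZMod.intCast_zmod_eq_zero_iff_dvd (r ^ p - 1) p).mpr h
  push_cast at h1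
  rw [ZMod.pow_card] at h1
  apply (ZMod.intCast_zmod_eq_zero_iff_dvd _ _).mp
  push_cast
  linear_combination h1

open scoped Pointwise in
theorem omega_one_of_metacyclic
    (p : ℕ) (hp : p.Prime) (hodd : p ≠ 2)
    {G : Type*} [Group G] (a b : G) (n : ℕ) (hn : 1 ≤ n)
    (ha : orderOf a = p ^ n) (hb : orderOf b = p)
    (haN : (Subgroup.zpowers a).Normal)
    (hab : Subgroup.zpowers a ⊓ Subgroup.zpowers b = ⊥)
    (hgen : Subgroup.closure {a, b} = ⊤) :
    {g : G | g ^ p = 1} = (Subgroup.closure {a ^ p ^ (n - 1), b} : Set G) ∧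
    Nat.card (Subgroup.closure {a ^ p ^ (n - 1), b} : Subgroup G) = p ^ 2 ∧
    (∀ x ∈ Subgroup.closure {a ^ p ^ (n - 1), b},
      ∀ y ∈ Subgroup.closure {a ^ p ^ (n - 1), b}, x * y = y * x) ∧
    (∀ x ∈ Subgroup.closure {a ^ p ^ (n - 1), b}, x ^ p = 1) := by
  haveI : Fact p.Prime := ⟨hp⟩
  haveI : NeZero p := ⟨hp.ne_zero⟩
  obtain ⟨m, rfl⟩ : ∃ m, n = m + 1 := ⟨n - 1, (Nat.succ_pred_eq_of_pos hn).symm⟩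
  have hm : m + 1 - 1 = m := rfl
  rw [hm]
  set c : G := a ^ p ^ m with hcdef
  -- basic order facts
  have hbp : b ^ p = 1 := by rw [← hb]; exact pow_orderOf_eq_one b
  have hap : a ^ p ^ (m+1) = 1 := by rw [← ha]; exact pow_orderOf_eq_one a
  have hcp : c ^ p = 1 := by
    rw [hcdef, ← pow_mul, ← pow_succ, hap]
  have hcne : c ≠ 1 := by
    intro hc1
    have := orderOf_dvd_of_pow_eq_one (hcdef ▸ hc1)
    rw [ha] at this
    exact absurd (Nat.le_of_dvd (pow_pos hp.pos m) this)
      (not_le.mpr (Nat.pow_lt_pow_succ hp.one_lt))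
  have hc_ord : orderOf c = p := by
    rcases (Nat.Prime.eq_one_or_self_of_dvd hp _ (orderOf_dvd_of_pow_eq_one hcp)) with h | h
    · exact absurd (orderOf_eq_one_iff.mp h) hcne
    · exact h
  -- conjugation exponent r
  obtain ⟨r, hr⟩ := Subgroup.mem_zpowers_iff.mp (haN.conj_mem a (Subgroup.mem_zpowers a) b)
  -- b^k a b^-k = a^(r^k)
  have hstep : ∀ k : ℕ, b ^ k * a * (b ^ k)⁻¹ = a ^ ((r:ℤ) ^ k) := by
    intro k
    have := conj_pow_zpow a b r hr.symm k 1
    simpa using this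
  have hrp : ((p:ℤ) ^ (m+1)) ∣ r ^ p - 1 := by
    have h1 : a ^ ((r:ℤ) ^ p) = a := by
      rw [← hstep p, hbp]; group
    have h2 : a ^ ((r:ℤ) ^ p - 1) = 1 := by
      rw [zpow_sub, h1]; simp
    have := orderOf_dvd_iff_zpow_eq_one.mpr h2
    rw [ha] at this
    exact_mod_cast this
  have hpr1 : (p:ℤ) ∣ r - 1 := by
    apply aux_fermat p hp
    calc (p:ℤ) ∣ (p:ℤ) ^ (m+1) := dvd_pow_self _ (Nat.succ_ne_zero m)
    _ ∣ r ^ p - 1 := hrp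
  -- b commutes with c
  have hbc : b * c * b⁻¹ = c := by
    have h1 : b * c * b⁻¹ = a ^ ((r:ℤ) * (p ^ m : ℕ)) := by
      have := conj_zpow_eq a b r hr.symm ((p:ℤ) ^ m)
      rw [hcdef]
      push_cast at this ⊢
      rw [← zpow_natCast a (p ^ m)] at *
      push_cast
      exact this
    rw [h1]
    have : ((r:ℤ) * (p ^ m : ℕ)) = (p ^ m : ℕ) + (r - 1) * (p ^ m : ℕ) := by ring
    rw [this, zpow_add]
    have hc1 : a ^ (((r:ℤ) - 1) * (p ^ m : ℕ)) = 1 := by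
      rw [mul_comm, zpow_mul, zpow_natCast, ← hcdef]
      apply orderOf_dvd_iff_zpow_eq_one.mp
      rw [hc_ord]
      exact hpr1
    rw [hc1, zpow_natCast, ← hcdef, mul_one]
  have hcomm : Commute c b := by
    show c * b = b * c
    conv_lhs => rw [← hbc]
    rw [inv_mul_cancel_right]
  -- multiplication rule in H
  have hmul : ∀ i j i' j' : ℤ, (c ^ i * b ^ j) * (c ^ i' * b ^ j') = c ^ (i + i') * b ^ (j + j') := by
    intro i j i' j'
    have hcm : b ^ j * c ^ i' = c ^ i' * b ^ j := ((hcomm.zpow_zpow i' j).symm).eq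
    calc (c ^ i * b ^ j) * (c ^ i' * b ^ j') = c ^ i * (b ^ j * c ^ i') * b ^ j' := by group
    _ = c ^ i * (c ^ i' * b ^ j) * b ^ j' := by rw [hcm]
    _ = (c ^ i * c ^ i') * (b ^ j * b ^ j') := by group
    _ = c ^ (i + i') * b ^ (j + j') := by rw [← zpow_add, ← zpow_add]
  -- membership characterization
  have hmemH : ∀ g : G, g ∈ Subgroup.closure {c, b} ↔ ∃ i j : ℤ, c ^ i * b ^ j = g := by
    intro g
    constructor
    · intro hg
      induction hg using Subgroup.closure_induction with
      | mem x hx =>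
        simp only [Set.mem_insert_iff, Set.mem_singleton_iff] at hx
        rcases hx with rfl | rfl
        · exact ⟨1, 0, by simp⟩
        · exact ⟨0, 1, by simp⟩
      | one => exact ⟨0, 0, by simp⟩
      | mul x y _ _ hx hy =>
        obtain ⟨i, j, rfl⟩ := hx
        obtain ⟨i', j', rfl⟩ := hy
        exact ⟨i + i', j + j', (hmul i j i' j').symm⟩
      | inv x _ hx =>
        obtain ⟨i, j, rfl⟩ := hx
        refine ⟨-i, -j, eq_inv_of_mul_eq_one_left ?_⟩
        have := hmul (-i) (-j) i j
        simpa using this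
    · rintro ⟨i, j, rfl⟩
      exact mul_mem (Subgroup.zpow_mem _ (Subgroup.subset_closure (by simp)) i)
        (Subgroup.zpow_mem _ (Subgroup.subset_closure (by simp)) j)
  -- zpow helper
  have hzp : ∀ (x : G) (i : ℤ), x ^ p = 1 → (x ^ i) ^ p = 1 := by
    intro x i h
    rw [← zpow_natCast (x ^ i), ← zpow_mul, mul_comm, zpow_mul, zpow_natCast, h, one_zpow]
  -- exponent p
  have hexp : ∀ x ∈ Subgroup.closure {c, b}, x ^ p = 1 := by
    intro x hx
    obtain ⟨i, j, rfl⟩ := (hmemH x).mp hx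
    rw [(hcomm.zpow_zpow i j).mul_pow p, hzp c i hcp, hzp b j hbp, one_mul]
  -- commutativity
  have hcommH : ∀ x ∈ Subgroup.closure {c, b}, ∀ y ∈ Subgroup.closure {c, b}, x * y = y * x := by
    intro x hx y hy
    obtain ⟨i, j, rfl⟩ := (hmemH x).mp hx
    obtain ⟨i', j', rfl⟩ := (hmemH y).mp hy
    rw [hmul, hmul, add_comm i i', add_comm j j']
  -- zpowers c ≤ zpowers a
  have hcA : Subgroup.zpowers c ≤ Subgroup.zpowers a :=
    Subgroup.zpowers_le.mpr ⟨(p ^ m : ℕ), by show a ^ ((p ^ m : ℕ) : ℤ) = c; rw [zpow_natCast]⟩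
  -- zpow reduces to val
  have hval : ∀ (x : G), orderOf x = p → ∀ i : ℤ, x ^ i = x ^ (((i : ZMod p).val : ℕ)) := by
    intro x hx i
    have h1 : (((((i : ZMod p).val : ℕ) : ℤ) - i : ℤ) : ZMod p) = 0 := by
      push_cast
      rw [ZMod.natCast_val, ZMod.cast_id]
      ring
    have h2 : (p:ℤ) ∣ (((i : ZMod p).val : ℕ) : ℤ) - i :=
      (ZMod.intCast_zmod_eq_zero_iff_dvd _ _).mp h1
    have h3 : x ^ ((((i : ZMod p).val : ℕ) : ℤ) - i) = 1 :=
      orderOf_dvd_iff_zpow_eq_one.mp (hx ▸ h2)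
    rw [zpow_sub] at h3
    rw [← mul_inv_eq_one.mp h3, zpow_natCast]
  -- the counting bijection
  set f : ZMod p × ZMod p → G := fun ij => c ^ (ij.1.val) * b ^ (ij.2.val) with hf
  have hinj : Function.Injective f := by
    rintro ⟨i1, j1⟩ ⟨i2, j2⟩ h
    simp only [hf] at h
    have hzq : c ^ ((i1.val : ℤ)) * b ^ ((j1.val : ℤ)) = c ^ ((i2.val : ℤ)) * b ^ ((j2.val : ℤ)) := by
      exact_mod_cast h
    have e1 := hmul (-(i2.val : ℤ)) (-(j2.val : ℤ)) (i1.val : ℤ) (j1.val : ℤ)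
    have e2 := hmul (-(i2.val : ℤ)) (-(j2.val : ℤ)) (i2.val : ℤ) (j2.val : ℤ)
    rw [hzq, e2] at e1
    simp only [neg_add_cancel, zpow_zero, one_mul, mul_one] at e1
    -- e1 : 1 = c ^ (-i2.val + i1.val) * b ^ (-j2.val + j1.val)
    have ec : c ^ (-(i2.val : ℤ) + (i1.val : ℤ)) = (b ^ (-(j2.val : ℤ) + (j1.val : ℤ)))⁻¹ :=
      eq_inv_of_mul_eq_one_left e1.symm
    have hmema : c ^ (-(i2.val : ℤ) + (i1.val : ℤ)) ∈ Subgroup.zpowers a ⊓ Subgroup.zpowers b := by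
      constructor
      · exact hcA (Subgroup.zpow_mem _ (Subgroup.mem_zpowers c) _)
      · rw [ec]
        exact Subgroup.inv_mem _ (Subgroup.zpow_mem _ (Subgroup.mem_zpowers b) _)
    rw [hab] at hmema
    have hc0 : c ^ (-(i2.val : ℤ) + (i1.val : ℤ)) = 1 := hmema
    have hb0 : b ^ (-(j2.val : ℤ) + (j1.val : ℤ)) = 1 := by
      have := ec ▸ hc0
      rw [inv_eq_one] at this
      exact this
    have hd1 : (p:ℤ) ∣ -(i2.val : ℤ) + (i1.val : ℤ) := by
      have h5 := orderOf_dvd_iff_zpow_eq_one.mpr hc0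
      rwa [hc_ord] at h5
    have hd2 : (p:ℤ) ∣ -(j2.val : ℤ) + (j1.val : ℤ) := by
      have h5 := orderOf_dvd_iff_zpow_eq_one.mpr hb0
      rwa [hb] at h5
    have hlt1 := ZMod.val_lt i1
    have hlt2 := ZMod.val_lt i2
    have hlt3 := ZMod.val_lt j1
    have hlt4 := ZMod.val_lt j2
    have hz1 : -(i2.val : ℤ) + (i1.val : ℤ) = 0 :=
      Int.eq_zero_of_abs_lt_dvd hd1 (by rw [abs_lt]; omega)
    have hz2 : -(j2.val : ℤ) + (j1.val : ℤ) = 0 :=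
      Int.eq_zero_of_abs_lt_dvd hd2 (by rw [abs_lt]; omega)
    have : i1.val = i2.val := by omega
    have hj : j1.val = j2.val := by omega
    ext
    · exact ZMod.val_injective p this
    · exact ZMod.val_injective p hj
  have hrange : Set.range f = (Subgroup.closure {c, b} : Set G) := by
    ext g
    simp only [Set.mem_range, SetLike.mem_coe]
    constructor
    · rintro ⟨⟨i, j⟩, rfl⟩
      exact (hmemH _).mpr ⟨i.val, j.val, by rw [zpow_natCast, zpow_natCast]⟩
    · intro hg
      obtain ⟨i, j, rfl⟩ := (hmemH _).mp hg
      exact ⟨((i : ZMod p), (j : ZMod p)), by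
        simp only [hf]
        rw [← hval c hc_ord i, ← hval b hb j]⟩
  have hcard : Nat.card (Subgroup.closure {c, b}) = p ^ 2 := by
    have h1 : Nat.card (Subgroup.closure {c, b}) = Nat.card (Set.range f) :=
      Nat.card_congr (Equiv.setCongr hrange.symm)
    rw [h1, Nat.card_range_of_injective hinj, Nat.card_prod, Nat.card_zmod, sq]
  -- the set equality
  have htop : Subgroup.zpowers a ⊔ Subgroup.zpowers b = ⊤ := by
    rw [Subgroup.zpowers_eq_closure, Subgroup.zpowers_eq_closure, ← Subgroup.closure_union,
      Set.singleton_union]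
    exact hgen
  have hset : {g : G | g ^ p = 1} = (Subgroup.closure {c, b} : Set G) := by
    ext g
    simp only [Set.mem_setOf_eq, SetLike.mem_coe]
    constructor
    · intro hg
      have hg_top : g ∈ Subgroup.zpowers a ⊔ Subgroup.zpowers b := by rw [htop]; trivial
      have hg2 : g ∈ (Subgroup.zpowers a : Set G) * (Subgroup.zpowers b : Set G) := by
        rw [← Subgroup.normal_mul]
        exact_mod_cast hg_top
      obtain ⟨x, hx, y, hy, rfl⟩ := hg2
      obtain ⟨i, rfl⟩ := Subgroup.mem_zpowers_iff.mp hx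
      obtain ⟨j, rfl⟩ := Subgroup.mem_zpowers_iff.mp hy
      obtain ⟨s, hs⟩ := Subgroup.mem_zpowers_iff.mp
        (haN.conj_mem a (Subgroup.mem_zpowers a) (b ^ j))
      -- p ∣ s - 1
      have hcs : c ^ s = c := by
        have hcomm' : Commute (b ^ j) c := (hcomm.symm).zpow_left j
        have h1 : b ^ j * c * (b ^ j)⁻¹ = c := by
          rw [hcomm'.eq, mul_inv_cancel_right]
        have h2 : b ^ j * c * (b ^ j)⁻¹ = c ^ s := by
          have h3 := conj_zpow_eq a (b ^ j) s hs.symm ((p ^ m : ℕ) : ℤ)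
          rw [hcdef, ← zpow_natCast a (p ^ m), h3, mul_comm, zpow_mul]
        rw [← h2, h1]
      have hps1 : (p:ℤ) ∣ s - 1 := by
        have h4 : c ^ (s - 1) = 1 := by
          rw [zpow_sub, hcs, zpow_one, mul_inv_cancel]
        rw [← hc_ord]
        exact orderOf_dvd_iff_zpow_eq_one.mpr h4
      -- the power formula
      have hpow : ∀ k : ℕ, (a ^ i * b ^ j) ^ k
          = a ^ (i * ∑ t ∈ Finset.range k, s ^ t) * (b ^ j) ^ k := by
        intro k
        induction k with
        | zero => simp
        | succ k ih =>
          rw [pow_succ, ih]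
          have hconj := conj_pow_zpow a (b ^ j) s hs.symm k i
          calc a ^ (i * ∑ t ∈ Finset.range k, s ^ t) * (b ^ j) ^ k * (a ^ i * b ^ j)
              = a ^ (i * ∑ t ∈ Finset.range k, s ^ t)
                * ((b ^ j) ^ k * a ^ i * ((b ^ j) ^ k)⁻¹) * ((b ^ j) ^ k * b ^ j) := by
                group
            _ = a ^ (i * ∑ t ∈ Finset.range k, s ^ t) * a ^ (s ^ k * i) * (b ^ j) ^ (k + 1) := by
                rw [hconj, ← pow_succ]
            _ = a ^ (i * ∑ t ∈ Finset.range (k+1), s ^ t) * (b ^ j) ^ (k + 1) := by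
                rw [← zpow_add, Finset.sum_range_succ]
                have harith : i * ∑ t ∈ Finset.range k, s ^ t + s ^ k * i
                    = i * (∑ t ∈ Finset.range k, s ^ t + s ^ k) := by ring
                rw [harith]
      have hg' : a ^ (i * ∑ t ∈ Finset.range p, s ^ t) = 1 := by
        have := hg
        rw [hpow p, hzp b j hbp, mul_one] at this
        exact this
      obtain ⟨w, hw⟩ := aux_sum p hp hodd s hps1
      have hdvd : ((p:ℤ)) ^ (m+1) ∣ i * (p * (1 + p * w)) := by
        rw [← hw]
        have := orderOf_dvd_iff_zpow_eq_one.mpr hg'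
        rw [ha] at this
        exact_mod_cast this
      have hp0 : (p:ℤ) ≠ 0 := by exact_mod_cast hp.ne_zero
      have hdvd2 : ((p:ℤ)) ^ m ∣ i * (1 + p * w) := by
        have hre : i * ((p:ℤ) * (1 + p * w)) = (i * (1 + p * w)) * p := by ring
        rw [hre, pow_succ] at hdvd
        exact (mul_dvd_mul_iff_right hp0).mp hdvd
      have hcop : IsCoprime ((p:ℤ) ^ m) (1 + p * w) :=
        IsCoprime.pow_left ⟨-w, 1, by ring⟩
      obtain ⟨q, hq⟩ := hcop.dvd_of_dvd_mul_right hdvd2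
      have hai : a ^ i = c ^ q := by
        rw [hq, zpow_mul]
        congr 1
        rw [hcdef, ← zpow_natCast a (p ^ m)]
        congr 1
      exact (hmemH _).mpr ⟨q, j, by rw [hai]⟩
    · intro hg
      exact hexp g hg
  exact ⟨hset, hcard, hcommH, hexp⟩
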